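/- Let N(X) be a monic polynomial of degree n with coefficients in the base field K, and let u, v ∈ L^n. Then the ideal product u·v (the coefficient vector of u(X)·v(X) mod N(X)) satisfies wt_R(u·v) ≤ wt_R(u)·wt_R(v). (Because N has coefficients in K, the support of u·v is contained in the K-span of the pairwise products of elements of Supp(u) and Supp(v).) -/
import Mathlib


open Polynomial Pointwise

/-- Rank weight of a vector over the extension `L` of the base field `K`. -/
noncomputable def rankWeight (K : Type*) {L : Type*} [Field K] [Field L] [Algebra K L]
    {ι : Type*} (v : ι → L) : ℕ :=
  Module.finrank K (Submodule.span K (Set.range v))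

/-- The ideal product of two vectors of length `n` modulo a polynomial `N` over the
base field: the coefficient vector of `u(X) * v(X) mod N(X)`. -/
noncomputable def idealProd {K L : Type*} [Field K] [Field L] [Algebra K L] {n : ℕ}
    (N : Polynomial K) (u v : Fin n → L) : Fin n → L :=
  fun i =>
    (((∑ j : Fin n, Polynomial.C (u j) * Polynomial.X ^ (j : ℕ)) *
        (∑ j : Fin n, Polynomial.C (v j) * Polynomial.X ^ (j : ℕ))) %ₘ
      (N.map (algebraMap K L))).coeff (i : ℕ)

theorem rankWeight_idealProd_le
    (q m n : ℕ)
    (K L : Type*) [Field K] [Fintype K] [Field L] [Algebra K L]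
    (hq : Fintype.card K = q) (hm : Module.finrank K L = m)
    (N : Polynomial K) (hN : N.Monic) (hNdeg : N.natDegree = n)
    (u v : Fin n → L) :
    rankWeight K (idealProd N u v) ≤ rankWeight K u * rankWeight K v := by
  classical
  set Nm : L[X] := N.map (algebraMap K L) with hNm
  set W : Submodule K L :=
    Submodule.span K (Set.range fun p : Fin n × Fin n => u p.1 * v p.2) with hW
  -- Step 1: every coefficient of the ideal product lies in W
  have hmem : ∀ i : Fin n, idealProd N u v i ∈ W := by
    intro i
    show ((((∑ j : Fin n, C (u j) * X ^ (j : ℕ)) *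
        (∑ j : Fin n, C (v j) * X ^ (j : ℕ))) %ₘ Nm).coeff (i : ℕ)) ∈ W
    rw [Finset.sum_mul_sum]
    have hrw : ∀ (j k : Fin n),
        (C (u j) * X ^ (j : ℕ)) * (C (v k) * X ^ (k : ℕ))
          = (u j * v k) • ((X : L[X]) ^ ((j : ℕ) + (k : ℕ))) := by
      intro j k
      rw [smul_eq_C_mul, C_mul, pow_add]
      ring
    simp_rw [hrw]
    have hmod : (∑ j : Fin n, ∑ k : Fin n,
          (u j * v k) • ((X : L[X]) ^ ((j : ℕ) + (k : ℕ)))) %ₘ Nm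
        = ∑ j : Fin n, ∑ k : Fin n,
          (u j * v k) • (((X : L[X]) ^ ((j : ℕ) + (k : ℕ))) %ₘ Nm) := by
      show Polynomial.modByMonicHom Nm _ = _
      rw [map_sum]
      refine Finset.sum_congr rfl fun j _ => ?_
      rw [map_sum]
      refine Finset.sum_congr rfl fun k _ => ?_
      rw [map_smul]
      rfl
    rw [hmod]
    rw [finset_sum_coeff]
    refine Submodule.sum_mem _ fun j _ => ?_
    rw [finset_sum_coeff]
    refine Submodule.sum_mem _ fun k _ => ?_
    rw [coeff_smul]
    have hX : ((X : L[X]) ^ ((j : ℕ) + (k : ℕ))) %ₘ Nm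
        = (((X : K[X]) ^ ((j : ℕ) + (k : ℕ))) %ₘ N).map (algebraMap K L) := by
      rw [map_modByMonic _ hN, Polynomial.map_pow, map_X]
    rw [hX, coeff_map]
    have : (u j * v k) • (algebraMap K L) ((((X : K[X]) ^ ((j:ℕ)+(k:ℕ))) %ₘ N).coeff (i:ℕ))
        = ((((X : K[X]) ^ ((j:ℕ)+(k:ℕ))) %ₘ N).coeff (i:ℕ)) • (u j * v k) := by
      rw [smul_eq_mul, Algebra.smul_def]
      ring
    rw [this]
    exact Submodule.smul_mem _ _ (Submodule.subset_span ⟨(j, k), rfl⟩)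
  -- Step 2: bound the rank of W
  set U : Submodule K L := Submodule.span K (Set.range u) with hU
  set V : Submodule K L := Submodule.span K (Set.range v) with hV
  have hUfin : FiniteDimensional K U := FiniteDimensional.span_of_finite K (Set.finite_range u)
  have hVfin : FiniteDimensional K V := FiniteDimensional.span_of_finite K (Set.finite_range v)
  set r := Module.finrank K U with hr
  set s := Module.finrank K V with hs
  let bU := Module.finBasis K U
  let bV := Module.finBasis K V
  let fU : Fin r → L := fun i => (bU i : L)
  let fV : Fin s → L := fun i => (bV i : L)
  have hUeq : Submodule.span K (Set.range fU) = U := by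
    have : Set.range fU = U.subtype '' Set.range bU := by
      rw [← Set.range_comp]; rfl
    rw [this, ← Submodule.map_span, bU.span_eq, Submodule.map_top, Submodule.range_subtype]
  have hVeq : Submodule.span K (Set.range fV) = V := by
    have : Set.range fV = V.subtype '' Set.range bV := by
      rw [← Set.range_comp]; rfl
    rw [this, ← Submodule.map_span, bV.span_eq, Submodule.map_top, Submodule.range_subtype]
  let g : Fin r × Fin s → L := fun p => fU p.1 * fV p.2
  have hWle : W ≤ Submodule.span K (Set.range g) := by
    rw [hW, Submodule.span_le]
    rintro _ ⟨⟨j, k⟩, rfl⟩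
    have hrange : Set.range g = Set.range fU * Set.range fV := by
      ext x
      constructor
      · rintro ⟨⟨a, b⟩, rfl⟩
        exact Set.mul_mem_mul ⟨a, rfl⟩ ⟨b, rfl⟩
      · rintro ⟨y, ⟨a, rfl⟩, z, ⟨b, rfl⟩, rfl⟩
        exact ⟨(a, b), rfl⟩
    rw [hrange, ← Submodule.span_mul_span]
    exact Submodule.mul_mem_mul (hUeq ▸ Submodule.subset_span ⟨j, rfl⟩)
      (hVeq ▸ Submodule.subset_span ⟨k, rfl⟩)
  have hspan : Submodule.span K (Set.range (idealProd N u v)) ≤ W :=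
    Submodule.span_le.mpr (by rintro _ ⟨i, rfl⟩; exact hmem i)
  have hgfin : FiniteDimensional K (Submodule.span K (Set.range g)) :=
    FiniteDimensional.span_of_finite K (Set.finite_range g)
  calc rankWeight K (idealProd N u v)
      ≤ Module.finrank K (Submodule.span K (Set.range g)) :=
        Submodule.finrank_mono (le_trans hspan hWle)
    _ ≤ Fintype.card (Fin r × Fin s) := finrank_range_le_card g
    _ = r * s := by simp
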